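/- Let f : S¹ → S¹ be a continuous open map and A ⊆ S¹ a closed set with f(A) ⊆ A. Then f maps the derived set of A into itself: f(A') ⊆ A', where A' denotes the set of accumulation points of A. -/

import Mathlib

open Set Topology Filter

/-- The circle. -/
abbrev S1 := AddCircle (1 : ℝ)

/-- Apply a word `l = [i₁, …, i_k]` of generators: `f i₁ ∘ ⋯ ∘ f i_k`. -/
def applyWord {X : Type*} {n : ℕ} (f : Fin n → X → X) (l : List (Fin n)) (x : X) : X :=
  l.foldr (fun i y => f i y) x

/-- The orbit of `x` under the semigroup `IFS(f₁,…,fₙ)` (nonempty words). -/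
def orbitIFS {X : Type*} {n : ℕ} (f : Fin n → X → X) (x : X) : Set X :=
  {y | ∃ l : List (Fin n), l ≠ [] ∧ y = applyWord f l x}

/-- `M` is a minimal set for the IFS generated by `f₁,…,fₙ`. -/
def IsMinimalIFS {X : Type*} [TopologicalSpace X] {n : ℕ} (f : Fin n → X → X)
    (M : Set X) : Prop :=
  M.Nonempty ∧ IsClosed M ∧ (∀ i, f i '' M ⊆ M) ∧
    ∀ x ∈ M, closure (orbitIFS f x) = M

/-- A Cantor set: nonempty, compact, perfect and totally disconnected. -/
def IsCantorSet {X : Type*} [TopologicalSpace X] (K : Set X) : Prop :=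
  K.Nonempty ∧ IsCompact K ∧ Perfect K ∧ IsTotallyDisconnected K

/-- `X` is (homeomorphic to) the circle or a (nondegenerate) closed interval. -/
def IsCircleOrInterval (X : Type*) [TopologicalSpace X] : Prop :=
  Nonempty (X ≃ₜ S1) ∨ ∃ a b : ℝ, a < b ∧ Nonempty (X ≃ₜ Set.Icc a b)

/-- The canonical decomposition `M = 𝓘 ∪ K ∪ N` of a closed set:
`𝓘` is the interior (union of components of the interior), `K` is the maximal
Cantor set contained in `M \ 𝓘` (possibly empty), and `N` is the countable remainder. -/
def IsCanonicalDecomp {X : Type*} [TopologicalSpace X] (M I K N : Set X) : Prop :=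
  I = interior M ∧
  (IsCantorSet K ∨ K = ∅) ∧
  K ⊆ M \ I ∧
  (∀ K₁ : Set X, IsCantorSet K₁ → K ⊆ K₁ → K₁ ⊆ M \ I → K₁ = K) ∧
  N = M \ (I ∪ K) ∧
  N.Countable

/-- A symmetric Cantorval: a nonempty compact set which is the closure of its interior,
and such that both endpoints of every nontrivial connected component are accumulation
points of one-point connected components. -/
def IsSymmetricCantorval {X : Type*} [TopologicalSpace X] (M : Set X) : Prop :=
  M.Nonempty ∧ IsCompact M ∧ M = closure (interior M) ∧
  ∀ x ∈ M, ¬ (connectedComponentIn M x).Subsingleton →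
    ∀ z ∈ frontier (connectedComponentIn M x),
      AccPt z (𝓟 {y | y ∈ M ∧ connectedComponentIn M y = {y}})


open Metric in
private lemma exists_interior_extremum {g : ℝ → ℝ} {a b : ℝ} (hab : a < b)
    (hg : ContinuousOn g (Icc a b)) (hgab : g a = g b) :
    ∃ t ∈ Ioo a b, IsMaxOn g (Icc a b) t ∨ IsMinOn g (Icc a b) t := by
  obtain ⟨m, hm, hmax⟩ := isCompact_Icc.exists_isMaxOn (nonempty_Icc.2 hab.le) hg
  obtain ⟨m', hm', hmin⟩ := isCompact_Icc.exists_isMinOn (nonempty_Icc.2 hab.le) hg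
  by_cases hmo : m ∈ Ioo a b
  · exact ⟨m, hmo, Or.inl hmax⟩
  by_cases hmo' : m' ∈ Ioo a b
  · exact ⟨m', hmo', Or.inr hmin⟩
  have hma : g m = g a := by
    rcases eq_or_lt_of_le hm.1 with h | h
    · rw [← h]
    rcases eq_or_lt_of_le hm.2 with h2 | h2
    · rw [h2, hgab]
    · exact absurd ⟨h, h2⟩ hmo
  have hma' : g m' = g a := by
    rcases eq_or_lt_of_le hm'.1 with h | h
    · rw [← h]
    rcases eq_or_lt_of_le hm'.2 with h2 | h2
    · rw [h2, hgab]
    · exact absurd ⟨h, h2⟩ hmo'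
  refine ⟨(a + b) / 2, ⟨by linarith, by linarith⟩, Or.inl fun s hs => ?_⟩
  have h1 : g s ≤ g m := hmax hs
  have h2 : g m' ≤ g ((a + b) / 2) := hmin ⟨by norm_num; linarith, by norm_num; linarith⟩
  simp only [mem_setOf_eq]
  calc g s ≤ g m := h1
    _ = g m' := by rw [hma, hma']
    _ ≤ g ((a + b) / 2) := h2

open Metric in
private lemma no_accPt_fiber (h : ℝ → AddCircle (1:ℝ)) (hc : Continuous h)
    (ho : IsOpenMap h) (c : AddCircle (1:ℝ)) (x : ℝ) :
    ¬ AccPt x (𝓟 (h ⁻¹' {c})) := by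
  intro hacc
  have hx : h x = c := by
    have h1 : x ∈ closure (h ⁻¹' {c}) :=
      mem_closure_iff_clusterPt.2 (AccPt.clusterPt hacc)
    rwa [(isClosed_singleton.preimage hc).closure_eq] at h1
  induction c using QuotientAddGroup.induction_on with
  | H ct =>
  set a : ℝ := ct + 1/2 with ha
  haveI : Fact ((0:ℝ) < 1) := ⟨one_pos⟩
  set e := AddCircle.equivIoc (1:ℝ) a with he
  set g : ℝ → ℝ := fun s => ((e (h s) : Ioc a (a + 1)) : ℝ) with hg
  have hπg : ∀ s, ((g s : ℝ) : AddCircle (1:ℝ)) = h s := fun s =>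
    (AddCircle.equivIoc 1 a).symm_apply_apply (h s)
  have hseam : ((ct : ℝ) : AddCircle (1:ℝ)) ≠ ((a : ℝ) : AddCircle (1:ℝ)) := by
    intro heq
    rw [QuotientAddGroup.eq_iff_sub_mem] at heq
    obtain ⟨k, hk⟩ := AddSubgroup.mem_zmultiples_iff.mp heq
    rw [zsmul_eq_mul, mul_one, ha] at hk
    have h2 : ((2 * k : ℤ) : ℝ) = ((-1 : ℤ) : ℝ) := by push_cast; linarith
    have h3 : (2 * k : ℤ) = (-1 : ℤ) := by exact_mod_cast h2
    omega
  set O : Set ℝ := h ⁻¹' {(a : AddCircle (1:ℝ))}ᶜ with hO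
  have hOopen : IsOpen O := (isClosed_singleton.isOpen_compl).preimage hc
  have hxO : x ∈ O := by simp only [hO, mem_preimage, mem_compl_iff, mem_singleton_iff, hx]; exact hseam
  have gcont : ∀ s ∈ O, ContinuousAt g s := fun s hs =>
    continuous_subtype_val.continuousAt.comp
      ((AddCircle.continuousAt_equivIoc 1 a hs).comp hc.continuousAt)
  obtain ⟨δ, hδ, hball⟩ := Metric.isOpen_iff.mp hOopen x hxO
  obtain ⟨y, ⟨hyb, hyF⟩, hyx⟩ := accPt_iff_nhds.mp hacc (ball x δ) (ball_mem_nhds x hδ)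
  have hyd : |y - x| < δ := by rw [← Real.dist_eq]; exact mem_ball.mp hyb
  rw [abs_lt] at hyd
  set A := min x y with hA
  set B := max x y with hB
  have hAB : A < B := min_lt_max.mpr (Ne.symm hyx)
  have hIccb : Icc A B ⊆ ball x δ := by
    intro s hs
    rw [mem_ball, Real.dist_eq, abs_lt]
    have h1 : x - δ < A := by simp only [hA, lt_min_iff]; constructor <;> linarith
    have h2 : B < x + δ := by simp only [hB, max_lt_iff]; constructor <;> linarith
    constructor <;> [linarith [hs.1]; linarith [hs.2]]
  have hIccO : Icc A B ⊆ O := fun s hs => hball (hIccb hs)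
  have hgcont : ContinuousOn g (Icc A B) := fun s hs =>
    (gcont s (hIccO hs)).continuousWithinAt
  have hval : ∀ s, h s = ((ct : ℝ) : AddCircle (1:ℝ)) → g s = ((e ct : Ioc a (a+1)) : ℝ) := by
    intro s hs; simp only [hg, hs]
  have hgab : g A = g B := by
    have h1 : g x = ((e ct : Ioc a (a+1)) : ℝ) := hval x hx
    have h2 : g y = ((e ct : Ioc a (a+1)) : ℝ) := hval y hyF
    rcases min_choice x y with hm | hm <;> rcases max_choice x y with hM | hM <;>
      simp only [hA, hB, hm, hM, h1, h2]
  obtain ⟨t, ht, hext⟩ := exists_interior_extremum hAB hgcont hgab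
  have htO : t ∈ O := hIccO (Ioo_subset_Icc_self ht)
  obtain ⟨η, hη, hηosc⟩ := Metric.continuousAt_iff.mp (gcont t htO) (1/4) (by norm_num)
  set η' := min η (min (t - A) (B - t)) with hη'
  have hη'pos : 0 < η' := by
    simp only [hη', lt_min_iff]; exact ⟨hη, by linarith [ht.1], by linarith [ht.2]⟩
  set J := Ioo (t - η') (t + η') with hJ
  have hJIcc : J ⊆ Icc A B := by
    intro s hs
    have h1 : η' ≤ t - A := le_trans (min_le_right _ _) (min_le_left _ _)
    have h2 : η' ≤ B - t := le_trans (min_le_right _ _) (min_le_right _ _)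
    exact ⟨by linarith [hs.1], by linarith [hs.2]⟩
  have hJosc : ∀ s ∈ J, |g s - g t| < 1/4 := by
    intro s hs
    have : dist s t < η := by
      rw [Real.dist_eq, abs_lt]
      have : η' ≤ η := min_le_left _ _
      constructor <;> [linarith [hs.1]; linarith [hs.2]]
    have := hηosc this
    rwa [Real.dist_eq] at this
  have hhJopen : IsOpen (h '' J) := ho J isOpen_Ioo
  have hhtJ : h t ∈ h '' J := ⟨t, ⟨by linarith, by linarith⟩, rfl⟩
  obtain ⟨ε, hε, hεball⟩ := Metric.isOpen_iff.mp hhJopen (h t) hhtJ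
  set ε' := min ε (1/4) with hε'
  have hε'pos : 0 < ε' := lt_min hε (by norm_num)
  have hε'le : ε' ≤ 1/4 := min_le_right _ _
  -- pick the shift direction depending on max/min
  have key : ∀ u : ℝ, |u - g t| ≤ ε' / 2 → ∃ s ∈ J, ∃ k : ℤ, g s - u = k := by
    intro u hu
    have hmem : ((u : ℝ) : AddCircle (1:ℝ)) ∈ ball (h t) ε := by
      rw [mem_ball, ← hπg t, dist_eq_norm, ← QuotientAddGroup.mk_sub]
      calc ‖((u - g t : ℝ) : AddCircle (1:ℝ))‖ ≤ ‖u - g t‖ := QuotientAddGroup.norm_mk_le_norm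
        _ = |u - g t| := Real.norm_eq_abs _
        _ < ε := by have : 0 < ε' := hε'pos; have : ε' ≤ ε := min_le_left _ _; linarith
    obtain ⟨s, hsJ, hsu⟩ := hεball hmem
    have : ((g s : ℝ) : AddCircle (1:ℝ)) = ((u : ℝ) : AddCircle (1:ℝ)) := by rw [hπg s, hsu]
    rw [QuotientAddGroup.eq_iff_sub_mem] at this
    obtain ⟨k, hk⟩ := AddSubgroup.mem_zmultiples_iff.mp this
    rw [zsmul_eq_mul, mul_one] at hk
    exact ⟨s, hsJ, k, by linarith⟩
  rcases hext with hmax | hmin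
  · obtain ⟨s, hsJ, k, hk⟩ := key (g t + ε'/2) (by rw [add_sub_cancel_left, abs_of_pos (by linarith)])
    have h1 : g s ≤ g t := hmax (hJIcc hsJ)
    have h2 : |g s - g t| < 1/4 := hJosc s hsJ
    rw [abs_lt] at h2
    have hk1 : (k : ℝ) < 0 := by linarith
    have hk2 : (-1 : ℝ) < k := by linarith
    have : (-1 : ℤ) < k := by exact_mod_cast hk2
    have : k < 0 := by exact_mod_cast hk1
    omega
  · obtain ⟨s, hsJ, k, hk⟩ := key (g t - ε'/2) (by rw [sub_sub_cancel_left, abs_neg, abs_of_pos (by linarith)])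
    have h1 : g t ≤ g s := hmin (hJIcc hsJ)
    have h2 : |g s - g t| < 1/4 := hJosc s hsJ
    rw [abs_lt] at h2
    have hk1 : (0 : ℝ) < k := by linarith
    have hk2 : (k : ℝ) < 1 := by linarith
    have : (0 : ℤ) < k := by exact_mod_cast hk1
    have : k < 1 := by exact_mod_cast hk2
    omega

theorem stmt11 (f : S1 → S1) (hcont : Continuous f) (hopen : IsOpenMap f)
    (A : Set S1) (hA : IsClosed A) (hinv : f '' A ⊆ A) :
    f '' {x : S1 | AccPt x (𝓟 A)} ⊆ {x : S1 | AccPt x (𝓟 A)} := by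
  rintro _ ⟨x, hxA, rfl⟩
  simp only [mem_setOf_eq] at hxA ⊢
  by_contra hnot
  rw [accPt_iff_nhds] at hnot
  push_neg at hnot
  obtain ⟨U, hU, hUsub⟩ := hnot
  have hAx : AccPt x (𝓟 (f ⁻¹' {f x})) := by
    rw [accPt_iff_nhds]
    intro W hW
    have hV : f ⁻¹' U ∈ 𝓝 x := hcont.continuousAt.preimage_mem_nhds hU
    obtain ⟨y, ⟨⟨hyW, hyU⟩, hyA⟩, hyx⟩ :=
      accPt_iff_nhds.mp hxA (W ∩ f ⁻¹' U) (inter_mem hW hV)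
    refine ⟨y, ⟨hyW, ?_⟩, hyx⟩
    have h1 : f y ∈ A := hinv ⟨y, hyA, rfl⟩
    have h2 : f y = f x := hUsub (f y) ⟨hyU, h1⟩
    simpa [mem_preimage, mem_singleton_iff] using h2
  obtain ⟨xt, hxt⟩ := QuotientAddGroup.mk_surjective x
  have hacc : AccPt xt (𝓟 ((fun s : ℝ => f (s : S1)) ⁻¹' {f x})) := by
    rw [accPt_iff_nhds]
    intro W hW
    obtain ⟨W₀, hW₀sub, hW₀open, hxtW₀⟩ := _root_.mem_nhds_iff.mp hW
    have himg : ((fun s : ℝ => (s : S1)) '' W₀) ∈ 𝓝 x :=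
      (QuotientAddGroup.isOpenMap_coe W₀ hW₀open).mem_nhds ⟨xt, hxtW₀, hxt⟩
    obtain ⟨z, ⟨hzW, hzF⟩, hzx⟩ := accPt_iff_nhds.mp hAx _ himg
    obtain ⟨s, hsW₀, rfl⟩ := hzW
    exact ⟨s, ⟨hW₀sub hsW₀, hzF⟩, fun hsx => hzx (by rw [hsx]; exact hxt)⟩
  exact no_accPt_fiber _ (hcont.comp continuous_quotient_mk')
    (hopen.comp QuotientAddGroup.isOpenMap_coe) (f x) xt hacc
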